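/- arXiv:math/0506469 — 5 statements merged into one kernel-verified Lean document; each statement's English description precedes it below -/
import Mathlib

section
/- Let k, ℓ ≥ 0 be integers and z > 0. Suppose λ is a partition of n contained in the (k,ℓ)-hook (i.e. λ_{k+1} ≤ ℓ) with λ_p ≥ ℓ for all p ≤ k and λ'_q ≥ k for all q ≤ ℓ, and write λ_p = (n+kℓ)/(k+ℓ) + c_p·√n for 1 ≤ p ≤ k and λ'_q = (n+kℓ)/(k+ℓ) + c'_q·√n for 1 ≤ q ≤ ℓ, where c_1 ≥ c_2 ≥ ⋯ ≥ c_k, c'_1 ≥ ⋯ ≥ c'_ℓ, c_1 + ⋯ + c_k + c'_1 + ⋯ + c'_ℓ = 0, and all c_p, c'_q ≤ z. Then for each 1 ≤ p ≤ k one has c_p ≥ -((ℓ+p-1)/(k-p+1))·z, and for each 1 ≤ q ≤ ℓ one has c'_q ≥ -((k+q-1)/(ℓ-q+1))·z. -/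
lemma aux_stmt0 (k l : ℕ) (z : ℝ) (c c' : ℕ → ℝ)
    (hmono : ∀ i j, 1 ≤ i → i ≤ j → j ≤ k → c j ≤ c i)
    (hsum : (∑ i ∈ Finset.Icc 1 k, c i) + (∑ j ∈ Finset.Icc 1 l, c' j) = 0)
    (hcz : ∀ i, 1 ≤ i → i ≤ k → c i ≤ z)
    (hc'z : ∀ j, 1 ≤ j → j ≤ l → c' j ≤ z)
    (p : ℕ) (hp1 : 1 ≤ p) (hpk : p ≤ k) :
    -(((l : ℝ) + (p : ℝ) - 1) / ((k : ℝ) - (p : ℝ) + 1)) * z ≤ c p := by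
  have hB : (0:ℝ) < (k:ℝ) - (p:ℝ) + 1 := by
    have : (p:ℝ) ≤ (k:ℝ) := by exact_mod_cast hpk
    linarith
  have hsplit : (∑ i ∈ Finset.Ioc 0 (p-1), c i) + (∑ i ∈ Finset.Ioc (p-1) k, c i)
      = ∑ i ∈ Finset.Ioc 0 k, c i :=
    Finset.sum_Ioc_consecutive _ (Nat.zero_le _) (le_trans (Nat.sub_le p 1) hpk)
  have hIcc : Finset.Icc 1 k = Finset.Ioc 0 k := by
    ext x; simp [Nat.lt_iff_add_one_le]
  have hS1 : (∑ i ∈ Finset.Ioc 0 (p-1), c i) ≤ ((p:ℝ) - 1) * z := by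
    have h := Finset.sum_le_card_nsmul (Finset.Ioc 0 (p-1)) c z (by
      intro x hx
      simp only [Finset.mem_Ioc] at hx
      exact hcz x hx.1 (le_trans hx.2 (le_trans (Nat.sub_le p 1) hpk)))
    rw [Nat.card_Ioc, nsmul_eq_mul] at h
    have : ((p - 1 - 0 : ℕ) : ℝ) = (p:ℝ) - 1 := by
      rw [Nat.sub_zero]; push_cast [Nat.cast_sub hp1]; ring
    rwa [this] at h
  have hS2 : (∑ i ∈ Finset.Ioc (p-1) k, c i) ≤ ((k:ℝ) - (p:ℝ) + 1) * c p := by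
    have h := Finset.sum_le_card_nsmul (Finset.Ioc (p-1) k) c (c p) (by
      intro x hx
      simp only [Finset.mem_Ioc] at hx
      have hpx : p ≤ x := by omega
      exact hmono p x hp1 hpx hx.2)
    rw [Nat.card_Ioc, nsmul_eq_mul] at h
    have : ((k - (p-1) : ℕ) : ℝ) = (k:ℝ) - (p:ℝ) + 1 := by
      have : p - 1 ≤ k := le_trans (Nat.sub_le p 1) hpk
      push_cast [Nat.cast_sub this, Nat.cast_sub hp1]; ring
    rwa [this] at h
  have hS3 : (∑ j ∈ Finset.Icc 1 l, c' j) ≤ (l:ℝ) * z := by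
    have h := Finset.sum_le_card_nsmul (Finset.Icc 1 l) c' z (by
      intro x hx
      simp only [Finset.mem_Icc] at hx
      exact hc'z x hx.1 hx.2)
    rw [Nat.card_Icc, nsmul_eq_mul] at h
    have : ((l + 1 - 1 : ℕ) : ℝ) = (l:ℝ) := by simp
    rwa [this] at h
  rw [hIcc, ← hsplit] at hsum
  have key : -(((l:ℝ) + (p:ℝ) - 1) * z) ≤ ((k:ℝ) - (p:ℝ) + 1) * c p := by linarith
  have : -(((l : ℝ) + (p : ℝ) - 1) / ((k : ℝ) - (p : ℝ) + 1)) * z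
      = (-(((l:ℝ) + (p:ℝ) - 1) * z)) / ((k : ℝ) - (p : ℝ) + 1) := by ring
  rw [this, div_le_iff₀ hB]
  linarith [key]

theorem stmt_0 (k l : ℕ) (z : ℝ) (hz : 0 < z) (c c' : ℕ → ℝ)
    (hmono : ∀ i j, 1 ≤ i → i ≤ j → j ≤ k → c j ≤ c i)
    (hmono' : ∀ i j, 1 ≤ i → i ≤ j → j ≤ l → c' j ≤ c' i)
    (hsum : (∑ i ∈ Finset.Icc 1 k, c i) + (∑ j ∈ Finset.Icc 1 l, c' j) = 0)
    (hcz : ∀ i, 1 ≤ i → i ≤ k → c i ≤ z)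
    (hc'z : ∀ j, 1 ≤ j → j ≤ l → c' j ≤ z) :
    (∀ p, 1 ≤ p → p ≤ k →
      -(((l : ℝ) + (p : ℝ) - 1) / ((k : ℝ) - (p : ℝ) + 1)) * z ≤ c p) ∧
    (∀ q, 1 ≤ q → q ≤ l →
      -(((k : ℝ) + (q : ℝ) - 1) / ((l : ℝ) - (q : ℝ) + 1)) * z ≤ c' q) := by
  constructor
  · exact fun p hp1 hpk => aux_stmt0 k l z c c' hmono hsum hcz hc'z p hp1 hpk
  · exact fun q hq1 hql => aux_stmt0 l k z c' c hmono'
      (by rw [add_comm]; exact hsum) hc'z hcz q hq1 hql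
end

section
/- ∫₀^∞ ∫_{-x₁/2}^{x₁} x₁·(x₁ - x₂)·(2x₁ + x₂)·(x₁ + 2x₂)·e^{-3(x₁² + x₂² + x₁x₂)} dx₂ dx₁ = 1/18. -/
open MeasureTheory Real

noncomputable def Faux (x y : ℝ) : ℝ :=
  ((x/3) * y^2 + (x^2/3) * y + x/9 - 2*x^3/3) * Real.exp (-3*(x^2+y^2+x*y))

noncomputable def gaux (x : ℝ) : ℝ :=
  (x/9) * Real.exp (-9*x^2) + (3*x^3/4 - x/9) * Real.exp (-(9/4)*x^2)

noncomputable def Gaux (x : ℝ) : ℝ :=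
  -(1/162) * Real.exp (-9*x^2) + (-x^2/6 - 4/81) * Real.exp (-(9/4)*x^2)

lemma hF (x y : ℝ) :
    HasDerivAt (Faux x)
      (x * ((x - y) * (2 * x + y) * (x + 2 * y)) * Real.exp (-3*(x^2+y^2+x*y))) y := by
  have hq : HasDerivAt (fun y : ℝ => -3*(x^2+y^2+x*y)) (-3*(2*y+x)) y := by
    have h : HasDerivAt (fun y : ℝ => x^2+y^2+x*y) (2*y+x) y := by
      have h1 : HasDerivAt (fun y : ℝ => y^2) (2*y) y := by
        simpa using hasDerivAt_pow 2 y
      have h2 : HasDerivAt (fun y : ℝ => x*y) x y := by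
        simpa using (hasDerivAt_id y).const_mul x
      exact (((hasDerivAt_const y (x^2)).add h1).add h2).congr_deriv (by ring)
    simpa using h.const_mul (-3)
  have he := hq.exp
  have hp : HasDerivAt (fun y : ℝ => (x/3) * y^2 + (x^2/3) * y + x/9 - 2*x^3/3)
      ((x/3)*(2*y) + x^2/3) y := by
    have h1 : HasDerivAt (fun y : ℝ => y^2) (2*y) y := by
      simpa using hasDerivAt_pow 2 y
    have h2 : HasDerivAt (fun y : ℝ => (x^2/3)*y) (x^2/3) y := by
      simpa using (hasDerivAt_id y).const_mul (x^2/3)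
    exact ((((h1.const_mul (x/3)).add h2).add (hasDerivAt_const y (x/9))).sub
      (hasDerivAt_const y (2*x^3/3))).congr_deriv (by ring)
  have := hp.mul he
  exact this.congr_deriv (by ring)

lemma inner_eq (x : ℝ) :
    (∫ y in (-x/2)..x,
        x * ((x - y) * (2 * x + y) * (x + 2 * y)) * Real.exp (-3*(x^2+y^2+x*y))) = gaux x := by
  rw [intervalIntegral.integral_eq_sub_of_hasDerivAt (fun y _ => hF x y)
    (Continuous.intervalIntegrable (by continuity) _ _)]
  have h1 : -3*(x^2+x^2+x*x) = -9*x^2 := by ring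
  have h2 : -3*(x^2+(-x/2)^2+x*(-x/2)) = -(9/4)*x^2 := by ring
  simp only [Faux, gaux, h1, h2]
  ring

lemma hG (x : ℝ) : HasDerivAt Gaux (gaux x) x := by
  have e1 : HasDerivAt (fun x : ℝ => -9*x^2) (-18*x) x := by
    have h1 : HasDerivAt (fun x : ℝ => x^2) (2*x) x := by
      simpa using hasDerivAt_pow 2 x
    have := h1.const_mul (-9)
    exact this.congr_deriv (by ring)
  have e2 : HasDerivAt (fun x : ℝ => -(9/4)*x^2) (-(9/2)*x) x := by
    have h1 : HasDerivAt (fun x : ℝ => x^2) (2*x) x := by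
      simpa using hasDerivAt_pow 2 x
    have := h1.const_mul (-(9/4))
    exact this.congr_deriv (by ring)
  have hA := (e1.exp).const_mul (-(1/162) : ℝ)
  have hp : HasDerivAt (fun x : ℝ => -x^2/6 - 4/81) (-x/3) x := by
    have h1 : HasDerivAt (fun x : ℝ => x^2) (2*x) x := by
      simpa using hasDerivAt_pow 2 x
    have h := (h1.const_mul (-(1/6) : ℝ)).sub (hasDerivAt_const x (4/81 : ℝ))
    have hfun : (fun x : ℝ => -(1/6)*x^2 - 4/81) = (fun x : ℝ => -x^2/6 - 4/81) := by
      funext t; ring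
    simp only [Pi.sub_def] at h
    rw [hfun] at h
    exact h.congr_deriv (by ring)
  have hB := hp.mul (e2.exp)
  have := hA.add hB
  unfold Gaux gaux
  exact this.congr_deriv (by ring)

lemma g_nonneg {x : ℝ} (hx : 0 < x) : 0 ≤ gaux x := by
  unfold gaux
  have hsplit : Real.exp (-9*x^2) = Real.exp (-(9/4)*x^2) * Real.exp (-(27/4)*x^2) := by
    rw [← Real.exp_add]; ring_nf
  have ht : (0:ℝ) < Real.exp (-(9/4)*x^2) := Real.exp_pos _
  have hs : 1 - (27/4)*x^2 ≤ Real.exp (-(27/4)*x^2) := by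
    have := Real.add_one_le_exp (-(27/4)*x^2)
    linarith
  rw [hsplit]
  nlinarith [Real.exp_pos (-(27/4)*x^2), mul_pos hx ht]

lemma G_tendsto : Filter.Tendsto Gaux Filter.atTop (nhds 0) := by
  have hc : Filter.Tendsto (fun x : ℝ => (9/4)*x^2) Filter.atTop Filter.atTop :=
    (Filter.tendsto_pow_atTop two_ne_zero).const_mul_atTop (by norm_num)
  have h1 : Filter.Tendsto (fun x : ℝ => Real.exp (-9*x^2)) Filter.atTop (nhds 0) := by
    rw [Real.tendsto_exp_comp_nhds_zero]
    rw [show (fun x : ℝ => -9*x^2) = (fun x : ℝ => -(9*x^2)) by funext t; ring]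
    rw [Filter.tendsto_neg_atBot_iff]
    exact (Filter.tendsto_pow_atTop two_ne_zero).const_mul_atTop (by norm_num)
  have h2 : Filter.Tendsto (fun x : ℝ => Real.exp (-(9/4)*x^2)) Filter.atTop (nhds 0) := by
    rw [Real.tendsto_exp_comp_nhds_zero]
    rw [show (fun x : ℝ => -(9/4)*x^2) = (fun x : ℝ => -((9/4)*x^2)) by funext t; ring]
    rw [Filter.tendsto_neg_atBot_iff]
    exact hc
  have h3 : Filter.Tendsto (fun x : ℝ => x^2 * Real.exp (-(9/4)*x^2)) Filter.atTop (nhds 0) := by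
    have hbase := Real.tendsto_pow_mul_exp_neg_atTop_nhds_zero 1
    have hcomp := hbase.comp hc
    have heq : (fun x : ℝ => x^2 * Real.exp (-(9/4)*x^2))
        = fun x : ℝ => (4/9) * (((fun t : ℝ => t^1 * Real.exp (-t)) ∘ (fun x : ℝ => (9/4)*x^2)) x) := by
      funext t
      simp [Function.comp]
      ring_nf
    rw [heq]
    simpa using hcomp.const_mul (4/9 : ℝ)
  have : Filter.Tendsto Gaux Filter.atTop
      (nhds (-(1/162) * 0 + (-(1/6) * 0 - 4/81 * 0))) := by
    unfold Gaux
    have hA := h1.const_mul (-(1/162) : ℝ)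
    have hB := (h3.const_mul (-(1/6) : ℝ)).sub (h2.const_mul (4/81 : ℝ))
    have := hA.add hB
    convert this using 1
    funext t
    ring
  simpa using this

theorem stmt_7 :
    ∫ x₁ in Set.Ioi (0 : ℝ),
      (∫ x₂ in (-x₁ / 2)..x₁,
        x₁ * ((x₁ - x₂) * (2 * x₁ + x₂) * (x₁ + 2 * x₂)) *
          Real.exp (-3 * (x₁ ^ 2 + x₂ ^ 2 + x₁ * x₂))) = 1 / 18 := by
  have hcongr : ∀ x ∈ Set.Ioi (0:ℝ),
      (∫ x₂ in (-x / 2)..x,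
        x * ((x - x₂) * (2 * x + x₂) * (x + 2 * x₂)) *
          Real.exp (-3 * (x ^ 2 + x₂ ^ 2 + x * x₂))) = gaux x := by
    intro x _
    rw [← inner_eq x]
  rw [setIntegral_congr_fun measurableSet_Ioi hcongr]
  have := integral_Ioi_of_hasDerivAt_of_nonneg (a := 0) (g := Gaux) (g' := gaux)
    ((Continuous.continuousWithinAt (by unfold Gaux; continuity)))
    (fun x _ => hG x) (fun x hx => g_nonneg hx) G_tendsto
  rw [this]
  unfold Gaux
  norm_num
end

section
/- ∫₀^∞ ∫_{-x₁/2}^{x₁} [x₁·((x₁ - x₂)(2x₁ + x₂)(x₁ + 2x₂))²·e^{-6(x₁² + x₂² + x₁x₂)}] dx₂ dx₁ = √π/(288√2). -/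
open MeasureTheory Real Set Filter Topology

lemma integrable_npow_gauss (n : ℕ) {b : ℝ} (hb : 0 < b) :
    Integrable fun x : ℝ => x ^ n * Real.exp (-b * x ^ 2) := by
  have h := integrable_rpow_mul_exp_neg_mul_sq hb (s := (n : ℝ))
    (lt_of_lt_of_le neg_one_lt_zero (Nat.cast_nonneg n))
  simpa [Real.rpow_natCast] using h

lemma tendsto_npow_gauss (n : ℕ) {b : ℝ} (hb : 0 < b) :
    Tendsto (fun x : ℝ => x ^ n * Real.exp (-b * x ^ 2)) atTop (𝓝 0) := by
  have h0 : Tendsto (fun x : ℝ => Real.exp (-(1/2) * x)) atTop (𝓝 0) := by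
    have h1 : Tendsto (fun x : ℝ => ((1:ℝ)/2) * x) atTop atTop :=
      Tendsto.const_mul_atTop (by norm_num) tendsto_id
    have h2 := Real.tendsto_exp_atBot.comp (tendsto_neg_atTop_atBot.comp h1)
    exact h2.congr (fun x => by simp [Function.comp])
  have h := (rpow_mul_exp_neg_mul_sq_isLittleO_exp_neg hb (n : ℝ)).isBigO.trans_tendsto h0
  simpa [Real.rpow_natCast] using h

noncomputable def g8 (x u : ℝ) : ℝ :=
  x * (2*u*(9/4*x^2 - u^2))^2 * (Real.exp (-(9/2 : ℝ) * x^2) * Real.exp (-(6 : ℝ) * u^2))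

lemma int_g8 : Integrable (fun p : ℝ × ℝ => g8 p.1 p.2) (volume.prod volume) := by
  have h92 : (0:ℝ) < 9/2 := by norm_num
  have h6 : (0:ℝ) < 6 := by norm_num
  have h1 := (integrable_npow_gauss 5 h92).mul_prod (integrable_npow_gauss 2 h6)
  have h2 := (integrable_npow_gauss 3 h92).mul_prod (integrable_npow_gauss 4 h6)
  have h3 := (integrable_npow_gauss 1 h92).mul_prod (integrable_npow_gauss 6 h6)
  have h := ((h1.const_mul (81/4)).sub (h2.const_mul 18)).add (h3.const_mul 4)
  apply h.congr
  filter_upwards with p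
  simp only [Pi.add_apply, Pi.sub_apply, g8]
  ring

lemma hasDerivAt_aux (A B C x : ℝ) :
    HasDerivAt (fun y : ℝ => (A*y^4 + B*y^2 + C) * Real.exp (-(9/2 : ℝ) * y^2))
      ((4*A*x^3 + 2*B*x + (A*x^4 + B*x^2 + C) * (-(9*x))) * Real.exp (-(9/2:ℝ) * x^2)) x := by
  have hp : HasDerivAt (fun y : ℝ => A*y^4 + B*y^2 + C) (4*A*x^3 + 2*B*x) x := by
    have h := (((hasDerivAt_pow 4 x).const_mul A).add ((hasDerivAt_pow 2 x).const_mul B)).add_const C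
    exact h.congr_deriv (by push_cast; ring)
  have he : HasDerivAt (fun y : ℝ => Real.exp (-(9/2:ℝ)*y^2))
      (Real.exp (-(9/2:ℝ)*x^2) * (-(9:ℝ)*x)) x := by
    have h := ((hasDerivAt_pow 2 x).const_mul (-(9/2:ℝ))).exp
    convert h using 1
    ring
  have h := hp.mul he
  exact h.congr_deriv (by ring)

theorem stmt_8 :
    ∫ x₁ in Set.Ioi (0 : ℝ),
      (∫ x₂ in (-x₁ / 2)..x₁,
        x₁ * ((x₁ - x₂) * (2 * x₁ + x₂) * (x₁ + 2 * x₂)) ^ 2 *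
          Real.exp (-6 * (x₁ ^ 2 + x₂ ^ 2 + x₁ * x₂))) =
    Real.sqrt π / (288 * Real.sqrt 2) := by
  classical
  set S : Set (ℝ × ℝ) := {p | 0 < p.1 ∧ 0 < p.2 ∧ p.2 ≤ 3 * p.1 / 2} with hSdef
  have hSm : MeasurableSet S := by
    have : S = {p : ℝ × ℝ | 0 < p.1} ∩ ({p | 0 < p.2} ∩ {p | p.2 ≤ 3 * p.1 / 2}) := by
      ext p; simp [hSdef, and_assoc]
    rw [this]
    exact (measurableSet_lt measurable_const measurable_fst).inter
      ((measurableSet_lt measurable_const measurable_snd).inter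
        (measurableSet_le measurable_snd (by fun_prop)))
  set f : ℝ → ℝ → ℝ := fun x u => S.indicator (fun p => g8 p.1 p.2) (x, u) with hfdef
  have hfint : Integrable (Function.uncurry f) (volume.prod volume) := by
    have h := int_g8.indicator hSm
    apply h.congr
    filter_upwards with p
    simp [hfdef, Function.uncurry]
  have step1 : ∀ x ∈ Ioi (0:ℝ),
      (∫ x₂ in (-x / 2)..x,
        x * ((x - x₂) * (2 * x + x₂) * (x + 2 * x₂)) ^ 2 *
          Real.exp (-6 * (x ^ 2 + x₂ ^ 2 + x * x₂))) = ∫ u, f x u := by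
    intro x hx
    have hx0 : (0:ℝ) < x := hx
    have hsub := intervalIntegral.integral_comp_sub_right (a := (0:ℝ)) (b := 3*x/2)
      (fun x₂ => x * ((x - x₂) * (2 * x + x₂) * (x + 2 * x₂)) ^ 2 *
          Real.exp (-6 * (x ^ 2 + x₂ ^ 2 + x * x₂))) (x/2)
    rw [show (0:ℝ) - x/2 = -x/2 by ring, show 3*x/2 - x/2 = x by ring] at hsub
    rw [← hsub, intervalIntegral.integral_of_le (by linarith : (0:ℝ) ≤ 3*x/2),
      ← integral_indicator measurableSet_Ioc]
    congr 1
    funext u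
    by_cases hu : u ∈ Ioc (0:ℝ) (3*x/2)
    · rw [indicator_of_mem hu]
      have hmem : ((x, u) : ℝ × ℝ) ∈ S := ⟨hx0, hu.1, by linarith [hu.2]⟩
      rw [hfdef]
      simp only []
      rw [indicator_of_mem hmem]
      simp only [g8]
      rw [show -6 * (x ^ 2 + (u - x/2) ^ 2 + x * (u - x/2)) = -(9/2:ℝ)*x^2 + -(6:ℝ)*u^2 by ring,
        Real.exp_add]
      ring
    · rw [indicator_of_notMem hu, hfdef]
      simp only []
      rw [indicator_of_notMem]
      rintro ⟨-, h1, h2⟩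
      exact hu ⟨h1, by linarith⟩
  rw [setIntegral_congr_fun measurableSet_Ioi step1]
  rw [setIntegral_eq_integral_of_forall_compl_eq_zero (fun x hx => ?side1)]
  case side1 =>
    have hx : ¬ (0:ℝ) < x := hx
    have hz : ∀ u, f x u = 0 := fun u =>
      indicator_of_notMem (fun h => hx h.1) _
    simp only [hz, integral_zero]
  rw [integral_integral_swap hfint]
  rw [← setIntegral_eq_integral_of_forall_compl_eq_zero (s := Ioi (0:ℝ)) (fun u hu => ?side2)]
  case side2 =>
    have hu : ¬ (0:ℝ) < u := hu
    have hz : ∀ x, f x u = 0 := fun x =>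
      indicator_of_notMem (fun h => hu h.2.1) _
    simp only [hz, integral_zero]
  have step5 : ∀ u ∈ Ioi (0:ℝ), (∫ x, f x u) = (2/9) * u^2 * Real.exp (-(8:ℝ) * u^2) := by
    intro u hu
    have hu0 : (0:ℝ) < u := hu
    have hset : ∀ x, f x u = (Ici (2*u/3)).indicator (fun x => g8 x u) x := by
      intro x
      by_cases hx : x ∈ Ici (2*u/3)
      · rw [indicator_of_mem hx, hfdef]
        simp only []
        rw [indicator_of_mem]
        exact ⟨by have := hx.out; linarith, hu0, by have := hx.out; linarith⟩
      · rw [indicator_of_notMem hx, hfdef]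
        simp only []
        rw [indicator_of_notMem]
        rintro ⟨-, -, h2⟩
        exact hx (by simp only [mem_Ici]; linarith)
    simp only [hset]
    rw [integral_indicator measurableSet_Ici, integral_Ici_eq_integral_Ioi]
    set E : ℝ := Real.exp (-(6:ℝ) * u^2) with hE
    set A : ℝ := -(4*u^2*E) * (9/16) with hA
    set B : ℝ := -(4*u^2*E) * (1/4 - u^2/2) with hB
    set C : ℝ := -(4*u^2*E) * (u^4/9 - u^2/9 + 1/18) with hC
    have hder : ∀ x ∈ Ici (2*u/3),
        HasDerivAt (fun y : ℝ => (A*y^4 + B*y^2 + C) * Real.exp (-(9/2 : ℝ) * y^2))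
          (g8 x u) x := by
      intro x _
      have h := hasDerivAt_aux A B C x
      convert h using 1
      simp only [g8, hA, hB, hC, hE]
      ring
    have hint : IntegrableOn (fun x => g8 x u) (Ioi (2*u/3)) := by
      have h92 : (0:ℝ) < 9/2 := by norm_num
      have h := (((integrable_npow_gauss 5 h92).const_mul (81/4*u^2*E)).sub
        ((integrable_npow_gauss 3 h92).const_mul (18*u^4*E))).add
        ((integrable_npow_gauss 1 h92).const_mul (4*u^6*E))
      refine (h.congr ?_).integrableOn
      filter_upwards with x
      simp only [Pi.add_apply, Pi.sub_apply, g8, hE]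
      ring
    have htend : Tendsto (fun y : ℝ => (A*y^4 + B*y^2 + C) * Real.exp (-(9/2 : ℝ) * y^2))
        atTop (𝓝 0) := by
      have h92 : (0:ℝ) < 9/2 := by norm_num
      have h := (((tendsto_npow_gauss 4 h92).const_mul A).add
        ((tendsto_npow_gauss 2 h92).const_mul B)).add
        ((tendsto_npow_gauss 0 h92).const_mul C)
      have h' : Tendsto (fun y : ℝ => (A*y^4 + B*y^2 + C) * Real.exp (-(9/2 : ℝ) * y^2))
          atTop (𝓝 (A * 0 + B * 0 + C * 0)) := Tendsto.congr (fun y => by ring) h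
      simpa using h'
    rw [integral_Ioi_of_hasDerivAt_of_tendsto' hder hint htend]
    rw [show -(9/2:ℝ)*(2*u/3)^2 = -(2:ℝ)*u^2 by ring]
    rw [show (-(8:ℝ)*u^2) = (-(6:ℝ)*u^2) + (-(2:ℝ)*u^2) by ring, Real.exp_add]
    simp only [hA, hB, hC, hE]
    ring
  rw [setIntegral_congr_fun measurableSet_Ioi step5]
  have h8 : (0:ℝ) < 8 := by norm_num
  have eInt : Integrable (fun u : ℝ => Real.exp (-(8:ℝ)*u^2)) := by
    simpa using integrable_npow_gauss 0 h8
  have hI1 : IntegrableOn (fun u : ℝ =>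
      u^2 * Real.exp (-(8:ℝ)*u^2) - Real.exp (-(8:ℝ)*u^2)/16) (Ioi 0) :=
    ((integrable_npow_gauss 2 h8).sub (eInt.div_const 16)).integrableOn
  have hI2 : IntegrableOn (fun u : ℝ => Real.exp (-(8:ℝ)*u^2)/16) (Ioi 0) :=
    (eInt.div_const 16).integrableOn
  have hsplit : ∀ u : ℝ, (2/9) * u^2 * Real.exp (-(8:ℝ) * u^2) =
      (2/9 : ℝ) * ((u^2 * Real.exp (-(8:ℝ)*u^2) - Real.exp (-(8:ℝ)*u^2)/16) +
        Real.exp (-(8:ℝ)*u^2)/16) := fun u => by ring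
  simp only [hsplit]
  rw [integral_const_mul, integral_add hI1 hI2]
  have h1 : (∫ u in Ioi (0:ℝ),
      (u^2 * Real.exp (-(8:ℝ)*u^2) - Real.exp (-(8:ℝ)*u^2)/16)) = 0 := by
    have hd : ∀ u ∈ Ici (0:ℝ),
        HasDerivAt (fun y : ℝ => (-(1:ℝ)/16) * (y * Real.exp (-(8:ℝ)*y^2)))
          (u^2 * Real.exp (-(8:ℝ)*u^2) - Real.exp (-(8:ℝ)*u^2)/16) u := by
      intro u _
      have h := (((hasDerivAt_id u).mul
        (((hasDerivAt_pow 2 u).const_mul (-(8:ℝ))).exp)).const_mul (-(1:ℝ)/16))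
      exact h.congr_deriv (by simp only [id_eq]; push_cast; ring)
    have ht : Tendsto (fun y : ℝ => (-(1:ℝ)/16) * (y * Real.exp (-(8:ℝ)*y^2)))
        atTop (𝓝 0) := by
      have h := (tendsto_npow_gauss 1 h8).const_mul (-(1:ℝ)/16)
      have h' : Tendsto (fun y : ℝ => (-(1:ℝ)/16) * (y * Real.exp (-(8:ℝ)*y^2)))
          atTop (𝓝 ((-(1:ℝ)/16) * 0)) := Tendsto.congr (fun y => by ring) h
      simpa using h'
    rw [integral_Ioi_of_hasDerivAt_of_tendsto' hd hI1 ht]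
    simp
  have h2 : (∫ u in Ioi (0:ℝ), Real.exp (-(8:ℝ)*u^2)/16) = (Real.sqrt (π/8)/2)/16 := by
    rw [integral_div, integral_gaussian_Ioi]
  rw [h1, h2, Real.sqrt_div Real.pi_pos.le,
    show (8:ℝ) = 2^2 * 2 by norm_num, Real.sqrt_mul (by positivity) 2,
    Real.sqrt_sq (by norm_num : (0:ℝ) ≤ 2)]
  have hs2 : Real.sqrt 2 ≠ 0 := by positivity
  field_simp
  ring
end

section
/- ∫₀^∞ ∫_{-x₁/2}^{x₁} ((x₁ - x₂)(2x₁ + x₂)(x₁ + 2x₂))²·e^{-6(x₁² + x₂² + x₁x₂)} dx₂ dx₁ = π/(324√3). -/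
open MeasureTheory Real Filter intervalIntegral Set Function

noncomputable def E6 (t : ℝ) : ℝ := ∫ u in (0:ℝ)..t, Real.exp (-6*u^2)
noncomputable def E9 (t : ℝ) : ℝ := ∫ u in (0:ℝ)..t, Real.exp (-(9/2)*u^2)
noncomputable def LL (x : ℝ) : ℝ := ∫ u in (0:ℝ)..x, E9 u * Real.exp (-(27/2)*u^2)

lemma hasDerivAt_E6 (t : ℝ) : HasDerivAt E6 (Real.exp (-6*t^2)) t :=
  ((Continuous.integral_hasStrictDerivAt (by fun_prop) 0 t).hasDerivAt)

lemma hasDerivAt_E9 (t : ℝ) : HasDerivAt E9 (Real.exp (-(9/2)*t^2)) t :=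
  ((Continuous.integral_hasStrictDerivAt (by fun_prop) 0 t).hasDerivAt)

lemma continuous_E9 : Continuous E9 :=
  continuous_iff_continuousAt.2 fun t => (hasDerivAt_E9 t).continuousAt

lemma hasDerivAt_LL (x : ℝ) : HasDerivAt LL (E9 x * Real.exp (-(27/2)*x^2)) x :=
  ((Continuous.integral_hasStrictDerivAt (continuous_E9.mul (by fun_prop)) 0 x).hasDerivAt)

lemma exp_deriv_aux (a t : ℝ) :
    HasDerivAt (fun t : ℝ => Real.exp (a*t^2)) (Real.exp (a*t^2) * (2*a*t)) t := by
  have h0 := (hasDerivAt_pow 2 t).const_mul a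
  have h0' : HasDerivAt (fun t : ℝ => a*t^2) (2*a*t) t := by
    refine h0.congr_deriv (Eq.symm ?_); push_cast; ring
  exact h0'.exp

lemma gauss_decay (n : ℕ) {a : ℝ} (ha : 0 < a) :
    Tendsto (fun x : ℝ => x^n * Real.exp (-a*x^2)) atTop (nhds 0) := by
  have hsq : Tendsto (fun x : ℝ => a * x^2) atTop atTop :=
    (tendsto_pow_atTop (two_ne_zero)).const_mul_atTop ha
  have h0 : Tendsto (fun x : ℝ => (a*x^2)^n * Real.exp (-(a*x^2)) / a^n) atTop (nhds 0) := by
    have := ((tendsto_pow_mul_exp_neg_atTop_nhds_zero n).comp hsq).div_const (a^n)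
    simpa using this
  apply squeeze_zero' (g := fun x : ℝ => (a*x^2)^n * Real.exp (-(a*x^2)) / a^n) ?_ ?_ h0
  · filter_upwards [eventually_ge_atTop (0:ℝ)] with x hx
    positivity
  · filter_upwards [eventually_ge_atTop (1:ℝ)] with x hx
    rw [mul_pow, show -a*x^2 = -(a*x^2) by ring,
      show a^n * (x^2)^n * Real.exp (-(a*x^2)) / a^n = (x^2)^n * Real.exp (-(a*x^2)) by
        field_simp]
    apply mul_le_mul_of_nonneg_right _ (Real.exp_pos _).le
    rw [← pow_mul]
    exact pow_le_pow_right₀ (le_trans (by norm_num) hx) (by omega)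

lemma exp_decay {a : ℝ} (ha : 0 < a) :
    Tendsto (fun x : ℝ => Real.exp (-a*x^2)) atTop (nhds 0) := by
  simpa using gauss_decay 0 ha

lemma inner_eval (c : ℝ) :
    ∫ t in (0:ℝ)..c, 4*t^2*(c^2 - t^2)^2 * Real.exp (-6*t^2)
    = (c^4/3 - c^2/6 + 5/144) * E6 c + (c^3/36 - 5*c/144) * Real.exp (-6*c^2) := by
  have key : ∀ t : ℝ, HasDerivAt
      (fun t => (c^4/3 - c^2/6 + 5/144) * E6 t
        + (-(t^5/3) + (2*c^2/3 - 5/36)*t^3 + (c^2/6 - 5/144 - c^4/3)*t) * Real.exp (-6*t^2))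
      (4*t^2*(c^2 - t^2)^2 * Real.exp (-6*t^2)) t := by
    intro t
    have h1 : HasDerivAt (fun t : ℝ => (c^4/3 - c^2/6 + 5/144) * E6 t)
        ((c^4/3 - c^2/6 + 5/144) * Real.exp (-6*t^2)) t := (hasDerivAt_E6 t).const_mul _
    have hid : HasDerivAt (fun y : ℝ => y) 1 t := hasDerivAt_id t
    have hp := (((hasDerivAt_pow 5 t).div_const 3).neg.add
        ((hasDerivAt_pow 3 t).const_mul (2*c^2/3 - 5/36))).add
        (hid.const_mul (c^2/6 - 5/144 - c^4/3))
    have he : HasDerivAt (fun t : ℝ => Real.exp (-6*t^2)) (Real.exp (-6*t^2) * (2*(-6)*t)) t := by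
      have := exp_deriv_aux (-6) t
      convert this using 2 <;> ring
    have := h1.add (hp.mul he)
    refine this.congr_deriv (Eq.symm ?_)
    simp only [Pi.add_apply, Pi.neg_apply]
    push_cast
    ring
  rw [intervalIntegral.integral_eq_sub_of_hasDerivAt (fun t _ => key t)
    (Continuous.intervalIntegrable (by fun_prop) _ _)]
  simp [E6, intervalIntegral.integral_same]
  ring

noncomputable def Ifun (x : ℝ) : ℝ :=
  (27/16*x^4 - 3/8*x^2 + 5/144) * Real.exp (-(9/2)*x^2) * E6 (3*x/2)
  + (3/32*x^3 - 5/96*x) * Real.exp (-18*x^2)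

lemma inner_full (x : ℝ) :
    (∫ x₂ in (-x / 2)..x,
        ((x - x₂) * (2 * x + x₂) * (x + 2 * x₂)) ^ 2 *
          Real.exp (-6 * (x ^ 2 + x₂ ^ 2 + x * x₂)))
    = Ifun x := by
  have step1 : (∫ x₂ in (-x / 2)..x,
        ((x - x₂) * (2 * x + x₂) * (x + 2 * x₂)) ^ 2 *
          Real.exp (-6 * (x ^ 2 + x₂ ^ 2 + x * x₂)))
      = ∫ x₂ in (-x / 2)..x,
          (fun t => Real.exp (-(9/2)*x^2) * (4*t^2*((3*x/2)^2 - t^2)^2 * Real.exp (-6*t^2)))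
            (x₂ + x/2) := by
    apply intervalIntegral.integral_congr
    intro x₂ _
    simp only
    rw [show (-6 * (x ^ 2 + x₂ ^ 2 + x * x₂)) = (-(9/2)*x^2 + -6*(x₂ + x/2)^2) by ring,
      Real.exp_add]
    ring
  rw [step1, intervalIntegral.integral_comp_add_right
      (fun t => Real.exp (-(9/2)*x^2) * (4*t^2*((3*x/2)^2 - t^2)^2 * Real.exp (-6*t^2))) (x/2),
    show -x / 2 + x / 2 = (0:ℝ) by ring, show x + x / 2 = 3*x/2 by ring,
    intervalIntegral.integral_const_mul, inner_eval (3*x/2)]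
  rw [Ifun, show (-6*(3*x/2)^2 : ℝ) = -(27/2)*x^2 by ring,
    show Real.exp (-18*x^2) = Real.exp (-(9/2)*x^2) * Real.exp (-(27/2)*x^2) by
      rw [← Real.exp_add]; congr 1; ring]
  ring

noncomputable def W (x : ℝ) : ℝ :=
  ((-(3/16)*x^3 - 1/48*x) * Real.exp (-(9/2)*x^2) + 1/18 * E9 x) * E6 (3*x/2)
  - 1/96*x^2 * Real.exp (-18*x^2) - 1/12 * LL x

lemma hasDerivAt_W (x : ℝ) : HasDerivAt W (Ifun x) x := by
  have hid : HasDerivAt (fun y : ℝ => y) 1 x := hasDerivAt_id x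
  have hlin : HasDerivAt (fun y : ℝ => 3*y/2) (3/2) x := by
    have := (hid.const_mul (3:ℝ)).div_const 2
    refine this.congr_deriv (Eq.symm ?_); ring
  have hE6c : HasDerivAt (fun y : ℝ => E6 (3*y/2)) (Real.exp (-6*(3*x/2)^2) * (3/2)) x :=
    by exact (hasDerivAt_E6 (3*x/2)).comp x hlin
  have hp1 : HasDerivAt (fun y : ℝ => -(3/16)*y^3 - 1/48*y)
      (-(3/16)*(3*x^2) - 1/48) x := by
    have := ((hasDerivAt_pow 3 x).const_mul (-(3/16) : ℝ)).sub (hid.const_mul (1/48 : ℝ))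
    refine this.congr_deriv (Eq.symm ?_); push_cast; ring
  have he9 : HasDerivAt (fun y : ℝ => Real.exp (-(9/2)*y^2))
      (Real.exp (-(9/2)*x^2) * (2*(-(9/2))*x)) x := by
    have := exp_deriv_aux (-(9/2)) x
    convert this using 3 <;> ring
  have he18 : HasDerivAt (fun y : ℝ => Real.exp (-18*y^2))
      (Real.exp (-18*x^2) * (2*(-18)*x)) x := by
    have := exp_deriv_aux (-18) x
    convert this using 3 <;> ring
  have hf1 : HasDerivAt (fun y : ℝ => (-(3/16)*y^3 - 1/48*y) * Real.exp (-(9/2)*y^2) + 1/18 * E9 y)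
      ((-(3/16)*(3*x^2) - 1/48) * Real.exp (-(9/2)*x^2)
        + (-(3/16)*x^3 - 1/48*x) * (Real.exp (-(9/2)*x^2) * (2*(-(9/2))*x))
        + 1/18 * Real.exp (-(9/2)*x^2)) x :=
    (hp1.mul he9).add ((hasDerivAt_E9 x).const_mul (1/18))
  have hx2 : HasDerivAt (fun y : ℝ => 1/96*y^2) (1/96*(2*x)) x := by
    have := (hasDerivAt_pow 2 x).const_mul (1/96 : ℝ)
    refine this.congr_deriv (Eq.symm ?_); push_cast; ring
  have hW' := ((hf1.mul hE6c).sub (hx2.mul he18)).sub ((hasDerivAt_LL x).const_mul (1/12))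
  have hexp : Real.exp (-6*(3*x/2)^2) = Real.exp (-(27/2)*x^2) := by congr 1; ring
  have hexp2 : Real.exp (-(9/2)*x^2) * Real.exp (-(27/2)*x^2) = Real.exp (-18*x^2) := by
    rw [← Real.exp_add]; congr 1; ring
  refine hW'.congr_deriv (Eq.symm ?_)
  rw [Ifun, hexp, ← hexp2]
  ring

lemma half_gauss {c : ℝ} (hc : 0 < c) :
    ∫ x in Ioi (0:ℝ), x * Real.exp (-c*x^2) = 1/(2*c) := by
  have hderiv : ∀ x : ℝ, HasDerivAt (fun x : ℝ => -Real.exp (-c*x^2)/(2*c))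
      (x * Real.exp (-c*x^2)) x := by
    intro x
    have := (exp_deriv_aux (-c) x).neg.div_const (2*c)
    have h2 : HasDerivAt (fun x : ℝ => -Real.exp (-c*x^2)/(2*c))
        (-(Real.exp (-c*x^2) * (2*(-c)*x))/(2*c)) x := by
      exact this
    refine h2.congr_deriv (Eq.symm ?_)
    field_simp
  have hlim : Tendsto (fun x : ℝ => -Real.exp (-c*x^2)/(2*c)) atTop (nhds 0) := by
    have := ((exp_decay hc).neg).div_const (2*c)
    simpa using this
  have := integral_Ioi_of_hasDerivAt_of_nonneg (g := fun x : ℝ => -Real.exp (-c*x^2)/(2*c))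
    (hderiv 0).continuousAt.continuousWithinAt (fun x _ => hderiv x)
    (fun x hx => by have hx' : (0:ℝ) < x := hx; positivity) hlim
  rw [this]
  norm_num
  ring

lemma K_eval : ∫ x in Ioi (0:ℝ), E9 x * Real.exp (-(27/2)*x^2) = π/(54*Real.sqrt 3) := by
  have hrw : ∀ x : ℝ, E9 x * Real.exp (-(27/2)*x^2)
      = ∫ v in Ioc (0:ℝ) 1, x * Real.exp (-((27+9*v^2)/2)*x^2) := by
    intro x
    have h1 : E9 x = x * ∫ v in (0:ℝ)..1, Real.exp (-(9/2)*(x*v)^2) := by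
      have h := intervalIntegral.smul_integral_comp_mul_left (a := (0:ℝ)) (b := 1)
        (fun u => Real.exp (-(9/2)*u^2)) x
      rw [mul_zero, mul_one] at h
      rw [E9, ← h, smul_eq_mul]
    have h2 : E9 x * Real.exp (-(27/2)*x^2)
        = ∫ v in (0:ℝ)..1, x * Real.exp (-((27+9*v^2)/2)*x^2) := by
      rw [h1, mul_assoc, mul_comm (∫ v in (0:ℝ)..1, Real.exp (-(9/2)*(x*v)^2)) _,
        ← intervalIntegral.integral_const_mul, ← intervalIntegral.integral_const_mul]
      apply intervalIntegral.integral_congr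
      intro v _
      simp only
      rw [show (-((27+9*v^2)/2)*x^2 : ℝ) = -(27/2)*x^2 + -(9/2)*(x*v)^2 by ring, Real.exp_add]
    rw [h2, intervalIntegral.integral_of_le (by norm_num : (0:ℝ) ≤ 1)]
  simp_rw [hrw]
  haveI : IsFiniteMeasure (volume.restrict (Ioc (0:ℝ) 1)) := by
    constructor
    rw [Measure.restrict_apply_univ, Real.volume_Ioc]
    exact ENNReal.ofReal_lt_top
  have hbnd : Integrable (fun z : ℝ × ℝ => (|z.1| * Real.exp (-(27/2)*z.1^2)) * (1:ℝ))
      ((volume.restrict (Ioi (0:ℝ))).prod (volume.restrict (Ioc (0:ℝ) 1))) := by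
    have hf1 : Integrable (fun x : ℝ => |x| * Real.exp (-(27/2)*x^2))
        (volume.restrict (Ioi (0:ℝ))) := by
      apply Integrable.restrict
      apply (integrable_mul_exp_neg_mul_sq (show (0:ℝ) < 27/2 by norm_num)).abs.congr
      filter_upwards with x
      rw [abs_mul, abs_of_pos (Real.exp_pos _)]
    exact hf1.mul_prod (integrable_const 1)
  have hF : Integrable (uncurry fun x v : ℝ => x * Real.exp (-((27+9*v^2)/2)*x^2))
      ((volume.restrict (Ioi (0:ℝ))).prod (volume.restrict (Ioc (0:ℝ) 1))) := by
    apply hbnd.mono'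
    · exact (Continuous.aestronglyMeasurable (by fun_prop))
    · filter_upwards with z
      obtain ⟨x, v⟩ := z
      simp only [Function.uncurry_apply_pair]
      rw [norm_mul, mul_one, Real.norm_eq_abs, Real.norm_eq_abs,
        abs_of_pos (Real.exp_pos _)]
      apply mul_le_mul_of_nonneg_left _ (abs_nonneg _)
      apply Real.exp_le_exp.2
      nlinarith [sq_nonneg x, sq_nonneg v, sq_nonneg (x*v)]
  rw [MeasureTheory.integral_integral_swap hF]
  have hinner : ∀ v : ℝ, (∫ x in Ioi (0:ℝ), x * Real.exp (-((27+9*v^2)/2)*x^2))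
      = 1/(27+9*v^2) := by
    intro v
    rw [half_gauss (by positivity)]
    rw [show (2*((27+9*v^2)/2) : ℝ) = 27+9*v^2 by ring]
  simp_rw [hinner]
  rw [← intervalIntegral.integral_of_le (by norm_num : (0:ℝ) ≤ 1)]
  have hs : Real.sqrt 3 * Real.sqrt 3 = 3 := Real.mul_self_sqrt (by norm_num)
  have hs0 : (0:ℝ) < Real.sqrt 3 := Real.sqrt_pos.2 (by norm_num)
  have key : ∀ v : ℝ, HasDerivAt (fun v : ℝ => 1/(9*Real.sqrt 3) * Real.arctan (v/Real.sqrt 3))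
      (1/(27+9*v^2)) v := by
    intro v
    have h1 : HasDerivAt (fun v : ℝ => v/Real.sqrt 3) (1/Real.sqrt 3) v := by
      have := (hasDerivAt_id v).div_const (Real.sqrt 3)
      simpa using this
    have h2 := (Real.hasDerivAt_arctan (v/Real.sqrt 3)).comp v h1
    have h3 := h2.const_mul (1/(9*Real.sqrt 3))
    refine h3.congr_deriv (Eq.symm ?_)
    have hpos : (0:ℝ) < 1 + (v/Real.sqrt 3)^2 := by positivity
    have hv : (v/Real.sqrt 3)^2 = v^2/3 := by
      rw [div_pow, Real.sq_sqrt (by norm_num : (0:ℝ) ≤ 3)]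
    rw [hv]
    field_simp
    linear_combination (27 + 9*v^2) * hs
  rw [intervalIntegral.integral_eq_sub_of_hasDerivAt (fun v _ => key v)
    (Continuous.intervalIntegrable (continuous_const.div (by fun_prop)
      (fun v => by positivity)) _ _)]
  rw [show (0:ℝ)/Real.sqrt 3 = 0 by ring, Real.arctan_zero, mul_zero, sub_zero,
    ← Real.tan_pi_div_six,
    Real.arctan_tan (by linarith [Real.pi_pos]) (by linarith [Real.pi_pos])]
  rw [div_mul_div_comm, one_mul, show (9*Real.sqrt 3)*6 = 54*Real.sqrt 3 by ring]

theorem stmt_9 :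
    ∫ x₁ in Set.Ioi (0 : ℝ),
      (∫ x₂ in (-x₁ / 2)..x₁,
        ((x₁ - x₂) * (2 * x₁ + x₂) * (x₁ + 2 * x₂)) ^ 2 *
          Real.exp (-6 * (x₁ ^ 2 + x₂ ^ 2 + x₁ * x₂))) =
    π / (324 * Real.sqrt 3) := by
  simp only [inner_full]
  -- limits of the pieces of W
  have h92 : (0:ℝ) < 9/2 := by norm_num
  have tE9 : Tendsto E9 atTop (nhds (∫ x in Ioi (0:ℝ), Real.exp (-(9/2)*x^2))) :=
    intervalIntegral_tendsto_integral_Ioi 0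
      ((integrable_exp_neg_mul_sq h92).integrableOn) tendsto_id
  have h32 : Tendsto (fun x : ℝ => 3*x/2) atTop atTop :=
    (tendsto_id.const_mul_atTop (show (0:ℝ) < 3 by norm_num)).atTop_div_const (by norm_num)
  have tE6 : Tendsto (fun x : ℝ => E6 (3*x/2)) atTop
      (nhds (∫ x in Ioi (0:ℝ), Real.exp (-6*x^2))) :=
    intervalIntegral_tendsto_integral_Ioi 0
      ((integrable_exp_neg_mul_sq (show (0:ℝ) < 6 by norm_num)).integrableOn) h32
  have hE9nonneg : ∀ u : ℝ, 0 ≤ u → 0 ≤ E9 u := by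
    intro u hu
    apply intervalIntegral.integral_nonneg hu
    intro t _
    positivity
  have hE9le : ∀ u : ℝ, 0 < u → E9 u ≤ ∫ x in Ioi (0:ℝ), Real.exp (-(9/2)*x^2) := by
    intro u hu
    rw [E9, intervalIntegral.integral_of_le hu.le]
    apply setIntegral_mono_set ((integrable_exp_neg_mul_sq h92).integrableOn)
    · filter_upwards with t using (Real.exp_pos _).le
    · exact HasSubset.Subset.eventuallyLE Set.Ioc_subset_Ioi_self
  have hC_int : IntegrableOn (fun u : ℝ => E9 u * Real.exp (-(27/2)*u^2)) (Ioi 0) volume := by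
    apply Integrable.mono'
      (((integrable_exp_neg_mul_sq (show (0:ℝ) < 27/2 by norm_num)).integrableOn
        (s := Ioi (0:ℝ))).const_mul (∫ x in Ioi (0:ℝ), Real.exp (-(9/2)*x^2)))
    · exact (continuous_E9.mul (by fun_prop)).aestronglyMeasurable.restrict
    · filter_upwards [ae_restrict_mem measurableSet_Ioi] with u hu
      rw [Real.norm_eq_abs, abs_mul, abs_of_nonneg (hE9nonneg u hu.out.le),
        abs_of_pos (Real.exp_pos _)]
      exact mul_le_mul_of_nonneg_right (hE9le u hu.out) (Real.exp_pos _).le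
  have tLL : Tendsto LL atTop (nhds (∫ x in Ioi (0:ℝ), E9 x * Real.exp (-(27/2)*x^2))) :=
    intervalIntegral_tendsto_integral_Ioi 0 hC_int tendsto_id
  have t1 : Tendsto (fun x : ℝ => (-(3/16)*x^3 - 1/48*x) * Real.exp (-(9/2)*x^2))
      atTop (nhds 0) := by
    have := ((gauss_decay 3 h92).const_mul (-(3/16):ℝ)).sub
      ((gauss_decay 1 h92).const_mul ((1/48):ℝ))
    simp only [mul_zero, sub_zero] at this
    exact this.congr (fun x => by ring)
  have t2 : Tendsto (fun x : ℝ => 1/96*x^2 * Real.exp (-18*x^2)) atTop (nhds 0) := by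
    have := (gauss_decay 2 (show (0:ℝ) < 18 by norm_num)).const_mul ((1/96):ℝ)
    simp only [mul_zero] at this
    exact this.congr (fun x => by ring)
  have tW : Tendsto W atTop (nhds
      ((0 + 1/18 * (∫ x in Ioi (0:ℝ), Real.exp (-(9/2)*x^2)))
        * (∫ x in Ioi (0:ℝ), Real.exp (-6*x^2)) - 0
        - 1/12 * (∫ x in Ioi (0:ℝ), E9 x * Real.exp (-(27/2)*x^2)))) := by
    exact (((t1.add (tE9.const_mul (1/18))).mul tE6).sub t2).sub (tLL.const_mul (1/12))
  have hnonneg : ∀ x ∈ Ioi (0:ℝ), 0 ≤ Ifun x := by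
    intro x hx
    rw [← inner_full x]
    apply intervalIntegral.integral_nonneg (by linarith [hx.out] : -x/2 ≤ x)
    intro u _
    positivity
  have hmain := integral_Ioi_of_hasDerivAt_of_nonneg (g := W) (g' := Ifun)
    (hasDerivAt_W 0).continuousAt.continuousWithinAt
    (fun x _ => hasDerivAt_W x) hnonneg tW
  have hW0 : W 0 = 0 := by
    simp [W, E6, E9, LL, intervalIntegral.integral_same]
  rw [hmain, hW0, sub_zero, integral_gaussian_Ioi, integral_gaussian_Ioi, K_eval]
  -- final arithmetic
  have hs : Real.sqrt 3 * Real.sqrt 3 = 3 := Real.mul_self_sqrt (by norm_num)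
  have hs0 : (0:ℝ) < Real.sqrt 3 := Real.sqrt_pos.2 (by norm_num)
  have hab : Real.sqrt (π/(9/2)) * Real.sqrt (π/6) = π/(3*Real.sqrt 3) := by
    rw [← Real.sqrt_mul (by positivity),
      show (π/(9/2))*(π/6) = (π/(3*Real.sqrt 3))^2 by
        rw [div_pow, mul_pow, Real.sq_sqrt (by norm_num : (0:ℝ) ≤ 3)]
        field_simp
        ring,
      Real.sqrt_sq (by positivity)]
  rw [show (0 + 1/18 * (Real.sqrt (π/(9/2))/2)) * (Real.sqrt (π/6)/2)
      = (Real.sqrt (π/(9/2)) * Real.sqrt (π/6))/72 by ring, hab]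
  have hne : Real.sqrt 3 ≠ 0 := hs0.ne'
  field_simp
  ring
end

section
/- ∫₀^∞ ∫_{-x₁/2}^{x₁} (x₁ - x₂)(2x₁ + x₂)(x₁ + 2x₂)·e^{-3(x₁² + x₂² + x₁x₂)} dx₂ dx₁ = √π/27. -/
open MeasureTheory Real

private lemma hasDerivH (x y : ℝ) :
    HasDerivAt (fun y : ℝ => (y ^ 2 / 3 + x * y / 3 - 2 * x ^ 2 / 3 + 1 / 9) *
      Real.exp (-3 * (x ^ 2 + y ^ 2 + x * y)))
      ((x - y) * (2 * x + y) * (x + 2 * y) * Real.exp (-3 * (x ^ 2 + y ^ 2 + x * y))) y := by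
  have h1 : HasDerivAt (fun y : ℝ => y ^ 2 / 3 + x * y / 3 - 2 * x ^ 2 / 3 + 1 / 9)
      (2 * y / 3 + x / 3) y := by
    have : HasDerivAt (fun y : ℝ => y ^ 2 / 3 + x * y / 3 - 2 * x ^ 2 / 3 + 1 / 9)
        (((↑2 * y ^ (2 - 1)) / 3 + x * 1 / 3 - 0) + 0) y :=
      ((((hasDerivAt_pow 2 y).div_const 3).add
        (((hasDerivAt_id' (x := y)).const_mul x).div_const 3)).sub
        (hasDerivAt_const y _)).add (hasDerivAt_const y _)
    convert this using 1; push_cast; ring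
  have h2 : HasDerivAt (fun y : ℝ => -3 * (x ^ 2 + y ^ 2 + x * y)) (-3 * (2 * y + x)) y := by
    have : HasDerivAt (fun y : ℝ => x ^ 2 + y ^ 2 + x * y)
        ((0 + ↑2 * y ^ (2 - 1)) + x * 1) y :=
      ((hasDerivAt_const y _).add (hasDerivAt_pow 2 y)).add
        ((hasDerivAt_id' (x := y)).const_mul x)
    have := this.const_mul (-3)
    exact this.congr_deriv (by push_cast; ring)
  have := h1.mul h2.exp
  exact this.congr_deriv (by ring)

private lemma inner_val (x : ℝ) :
    (∫ x₂ in (-x / 2)..x,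
        (x - x₂) * (2 * x + x₂) * (x + 2 * x₂) *
          Real.exp (-3 * (x ^ 2 + x₂ ^ 2 + x * x₂))) =
      (1 / 9) * Real.exp (-9 * x ^ 2) +
        (3 / 4 * x ^ 2 - 1 / 9) * Real.exp (-(9 / 4) * x ^ 2) := by
  rw [intervalIntegral.integral_eq_sub_of_hasDerivAt (fun y _ => hasDerivH x y)
    ((by fun_prop : Continuous fun y : ℝ => (x - y) * (2 * x + y) * (x + 2 * y) *
      Real.exp (-3 * (x ^ 2 + y ^ 2 + x * y))).intervalIntegrable _ _)]
  have e1 : (-3 * (x ^ 2 + x ^ 2 + x * x) : ℝ) = -9 * x ^ 2 := by ring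
  have e2 : (-3 * (x ^ 2 + (-x / 2) ^ 2 + x * (-x / 2)) : ℝ) = -(9 / 4) * x ^ 2 := by ring
  rw [e1, e2]
  ring

theorem stmt_10 :
    ∫ x₁ in Set.Ioi (0 : ℝ),
      (∫ x₂ in (-x₁ / 2)..x₁,
        (x₁ - x₂) * (2 * x₁ + x₂) * (x₁ + 2 * x₂) *
          Real.exp (-3 * (x₁ ^ 2 + x₂ ^ 2 + x₁ * x₂))) =
    Real.sqrt π / 27 := by
  have hb1 : (0:ℝ) < 9 := by norm_num
  have hb2 : (0:ℝ) < 9 / 4 := by norm_num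
  have hexp1 : IntegrableOn (fun x : ℝ => Real.exp (-9 * x ^ 2)) (Set.Ioi 0) :=
    (integrable_exp_neg_mul_sq hb1).integrableOn
  have hexp2 : IntegrableOn (fun x : ℝ => Real.exp (-(9 / 4) * x ^ 2)) (Set.Ioi 0) :=
    (integrable_exp_neg_mul_sq hb2).integrableOn
  have hx2 : IntegrableOn (fun x : ℝ => x ^ 2 * Real.exp (-(9 / 4) * x ^ 2)) (Set.Ioi 0) := by
    refine (integrableOn_rpow_mul_exp_neg_mul_sq hb2 (s := 2) (by norm_num)).congr_fun
      (fun x hx => ?_) measurableSet_Ioi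
    dsimp only
    rw [show (2:ℝ) = ((2:ℕ):ℝ) by norm_num, Real.rpow_natCast]
  set φ : ℝ → ℝ := fun x => -(x / 6) * Real.exp (-(9 / 4) * x ^ 2) with hφ
  set φ' : ℝ → ℝ := fun x => (3 / 4 * x ^ 2 - 1 / 6) * Real.exp (-(9 / 4) * x ^ 2) with hφ'
  have hderiv : ∀ x : ℝ, HasDerivAt φ (φ' x) x := by
    intro x
    have h1 : HasDerivAt (fun x : ℝ => -(x / 6)) (-(1 / 6)) x := by
      exact ((hasDerivAt_id' (x := x)).div_const 6).neg.congr_deriv (by norm_num)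
    have h2 : HasDerivAt (fun x : ℝ => -(9 / 4) * x ^ 2) (-(9 / 4) * (↑2 * x ^ (2 - 1))) x :=
      (hasDerivAt_pow 2 x).const_mul (-(9 / 4))
    have := h1.mul h2.exp
    exact this.congr_deriv (by simp only [hφ']; push_cast; ring)
  have hφ'int : IntegrableOn φ' (Set.Ioi 0) := by
    have h : IntegrableOn (fun x : ℝ => 3 / 4 * (x ^ 2 * Real.exp (-(9 / 4) * x ^ 2)) -
        1 / 6 * Real.exp (-(9 / 4) * x ^ 2)) (Set.Ioi 0) :=
      (hx2.const_mul (3 / 4)).sub (hexp2.const_mul (1 / 6))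
    exact h.congr_fun (fun x hx => by simp only [hφ']; ring) measurableSet_Ioi
  have hφtendsto : Filter.Tendsto φ Filter.atTop (nhds 0) := by
    have h0 : Filter.Tendsto (fun x : ℝ => x ^ (1:ℝ) * Real.exp (-(9 / 4) * x ^ 2))
        Filter.atTop (nhds 0) :=
      (rpow_mul_exp_neg_mul_sq_isLittleO_exp_neg hb2 1).trans_tendsto <| by
        have h : Filter.Tendsto (fun x : ℝ => -(1 / 2) * x) Filter.atTop Filter.atBot := by
          apply Filter.Tendsto.const_mul_atTop_of_neg (by norm_num : (-(1/2):ℝ) < 0)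
          exact Filter.tendsto_id
        exact Real.tendsto_exp_atBot.comp h
    have := h0.const_mul (-(1 / 6) : ℝ)
    rw [mul_zero] at this
    refine this.congr fun x => ?_
    simp only [hφ, Real.rpow_one]
    ring
  have key : ∫ x in Set.Ioi (0:ℝ), φ' x = 0 - φ 0 :=
    integral_Ioi_of_hasDerivAt_of_tendsto (hderiv 0).continuousAt.continuousWithinAt
      (fun x _ => hderiv x) hφ'int hφtendsto
  have hφ0 : φ 0 = 0 := by simp [hφ]
  rw [MeasureTheory.setIntegral_congr_fun measurableSet_Ioi (fun x _ => inner_val x)]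
  have hsplit : ∀ x : ℝ, (1 / 9) * Real.exp (-9 * x ^ 2) +
      (3 / 4 * x ^ 2 - 1 / 9) * Real.exp (-(9 / 4) * x ^ 2) =
      (1 / 9) * Real.exp (-9 * x ^ 2) +
        ((1 / 18) * Real.exp (-(9 / 4) * x ^ 2) + φ' x) := by
    intro x; simp only [hφ']; ring
  rw [MeasureTheory.setIntegral_congr_fun measurableSet_Ioi (fun x _ => hsplit x)]
  have hA : IntegrableOn (fun x : ℝ => 1 / 9 * Real.exp (-9 * x ^ 2)) (Set.Ioi 0) :=
    hexp1.const_mul _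
  have hB : IntegrableOn (fun x : ℝ => 1 / 18 * Real.exp (-(9 / 4) * x ^ 2)) (Set.Ioi 0) :=
    hexp2.const_mul _
  have hBC : IntegrableOn (fun x : ℝ => 1 / 18 * Real.exp (-(9 / 4) * x ^ 2) + φ' x)
      (Set.Ioi 0) := hB.add hφ'int
  rw [integral_add hA hBC, integral_add hB hφ'int,
    integral_const_mul, integral_const_mul, integral_gaussian_Ioi, integral_gaussian_Ioi,
    key, hφ0]
  have s9 : Real.sqrt (π / 9) = Real.sqrt π / 3 := by
    rw [Real.sqrt_div pi_pos.le, show (9:ℝ) = 3 ^ 2 by norm_num,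
      Real.sqrt_sq (by norm_num : (0:ℝ) ≤ 3)]
  have s94 : Real.sqrt (π / (9 / 4)) = Real.sqrt π / (3 / 2) := by
    rw [Real.sqrt_div pi_pos.le, show (9 / 4:ℝ) = (3 / 2) ^ 2 by norm_num,
      Real.sqrt_sq (by norm_num : (0:ℝ) ≤ 3 / 2)]
  rw [s9, s94]
  ring
end
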